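/- Let n, d, d' be positive integers and λ > 0. For each i = 1,…,n let h_i ∈ ℝ^d and let ℓ_i : ℝ^{d'} → ℝ be differentiable. Define the regularized loss L_λ : ℝ^{d'×d} → ℝ by L_λ(W) = (1/n)·Σ_{i=1}^n ℓ_i(W h_i) + (λ/2)·‖W‖_F². If W ∈ ℝ^{d'×d} is a critical point of L_λ (the total derivative of L_λ at W vanishes), then W W^⊤ = −(1/(nλ))·Σ_{i=1}^n (W h_i)(∇ℓ_i(W h_i))^⊤, where ∇ℓ_i(W h_i) ∈ ℝ^{d'} is the gradient of ℓ_i at W h_i and (W h_i)(∇ℓ_i(W h_i))^⊤ denotes the d'×d' outer-product matrix. -/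

import Mathlib

open Matrix

attribute [local instance] Matrix.frobeniusSeminormedAddCommGroup
  Matrix.frobeniusNormedAddCommGroup Matrix.frobeniusNormedSpace

/-- The gradient of a function `f : ℝ^k → ℝ`, as a plain vector `Fin k → ℝ`. -/
noncomputable def grad {k : ℕ} (f : EuclideanSpace ℝ (Fin k) → ℝ) (x : Fin k → ℝ) :
    Fin k → ℝ :=
  WithLp.equiv 2 (Fin k → ℝ) <| gradient f ((WithLp.equiv 2 (Fin k → ℝ)).symm x)

section aux

variable {d d' : ℕ}

/-- `V ↦ (WithLp.equiv 2 _).symm (V.mulVec x)` as a continuous linear map. -/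
noncomputable def PhiCLM (d d' : ℕ) (x : Fin d → ℝ) :
    Matrix (Fin d') (Fin d) ℝ →L[ℝ] EuclideanSpace ℝ (Fin d') :=
  LinearMap.toContinuousLinearMap <|
    (WithLp.linearEquiv 2 ℝ (Fin d' → ℝ)).symm.toLinearMap.comp
      ({ toFun := fun V : Matrix (Fin d') (Fin d) ℝ => V.mulVec x
         map_add' := fun A B => by simp [Matrix.add_mulVec]
         map_smul' := fun c A => Matrix.smul_mulVec c A x } :
        Matrix (Fin d') (Fin d) ℝ →ₗ[ℝ] (Fin d' → ℝ))

@[simp] lemma PhiCLM_apply (x : Fin d → ℝ) (V : Matrix (Fin d') (Fin d) ℝ) :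
    PhiCLM d d' x V = (WithLp.equiv 2 (Fin d' → ℝ)).symm (V.mulVec x) := rfl

/-- Entry evaluation as a continuous linear map. -/
noncomputable def entryCLM (d d' : ℕ) (a : Fin d') (b : Fin d) :
    Matrix (Fin d') (Fin d) ℝ →L[ℝ] ℝ :=
  LinearMap.toContinuousLinearMap <|
    (LinearMap.proj b).comp (LinearMap.proj (R := ℝ) (φ := fun _ : Fin d' => Fin d → ℝ) a)

@[simp] lemma entryCLM_apply (a : Fin d') (b : Fin d) (V : Matrix (Fin d') (Fin d) ℝ) :
    entryCLM d d' a b V = V a b := rfl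

end aux

/-- **Backward Features at Convergence Theorem (bFACT).** If `W` is a critical point of the
regularized loss `L_λ(W) = (1/n) ∑ i, ℓ i (W h_i) + (λ/2) ‖W‖_F²`, then
`W Wᵀ = -(1/(nλ)) ∑ i (W h_i) (∇ℓ_i(W h_i))ᵀ`. -/
theorem backward_features_at_convergence
    (n d d' : ℕ) (hn : 0 < n) (hd : 0 < d) (hd' : 0 < d')
    (lam : ℝ) (hlam : 0 < lam)
    (h : Fin n → Fin d → ℝ)
    (ℓ : Fin n → EuclideanSpace ℝ (Fin d') → ℝ)
    (hdiff : ∀ i, Differentiable ℝ (ℓ i))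
    (W : Matrix (Fin d') (Fin d) ℝ)
    (hcrit : fderiv ℝ
      (fun V : Matrix (Fin d') (Fin d) ℝ =>
        (1 / n : ℝ) * ∑ i, ℓ i ((WithLp.equiv 2 (Fin d' → ℝ)).symm (V.mulVec (h i)))
          + (lam / 2) * ∑ a : Fin d', ∑ b : Fin d, V a b ^ 2) W = 0) :
    W * Wᵀ = (-(1 / (n * lam))) •
      ∑ i, Matrix.vecMulVec (W.mulVec (h i)) (grad (ℓ i) (W.mulVec (h i))) := by
  -- the derivative of the loss
  set D : Matrix (Fin d') (Fin d) ℝ →L[ℝ] ℝ :=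
    (1 / n : ℝ) • (∑ i, (fderiv ℝ (ℓ i) (PhiCLM d d' (h i) W)).comp (PhiCLM d d' (h i)))
      + (lam / 2) • (∑ a : Fin d', ∑ b : Fin d, (2 * W a b) • entryCLM d d' a b) with hD
  have hHas : HasFDerivAt
      (fun V : Matrix (Fin d') (Fin d) ℝ =>
        (1 / n : ℝ) * ∑ i, ℓ i ((WithLp.equiv 2 (Fin d' → ℝ)).symm (V.mulVec (h i)))
          + (lam / 2) * ∑ a : Fin d', ∑ b : Fin d, V a b ^ 2) D W := by
    have h1 : ∀ i : Fin n, HasFDerivAt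
        (fun V : Matrix (Fin d') (Fin d) ℝ =>
          ℓ i ((WithLp.equiv 2 (Fin d' → ℝ)).symm (V.mulVec (h i))))
        ((fderiv ℝ (ℓ i) (PhiCLM d d' (h i) W)).comp (PhiCLM d d' (h i))) W := by
      intro i
      have := ((hdiff i).differentiableAt.hasFDerivAt).comp W (PhiCLM d d' (h i)).hasFDerivAt
      simp only [Function.comp_def] at this
      exact this
    have h2 : ∀ (a : Fin d') (b : Fin d), HasFDerivAt
        (fun V : Matrix (Fin d') (Fin d) ℝ => V a b ^ 2)
        ((2 * W a b) • entryCLM d d' a b) W := by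
      intro a b
      have := ((entryCLM d d' a b).hasFDerivAt (x := W)).mul
        ((entryCLM d d' a b).hasFDerivAt (x := W))
      simp only [entryCLM_apply] at this
      have h2' : W a b • entryCLM d d' a b + W a b • entryCLM d d' a b
          = (2 * W a b) • entryCLM d d' a b := by
        rw [← add_smul]; ring_nf
      replace this := this.congr_fderiv h2'
      refine this.congr_of_eventuallyEq (Filter.Eventually.of_forall fun V => ?_)
      simp [sq]
    have hA : HasFDerivAt
        (fun V : Matrix (Fin d') (Fin d) ℝ =>
          (1 / n : ℝ) * ∑ i, ℓ i ((WithLp.equiv 2 (Fin d' → ℝ)).symm (V.mulVec (h i))))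
        ((1 / n : ℝ) • (∑ i, (fderiv ℝ (ℓ i) (PhiCLM d d' (h i) W)).comp (PhiCLM d d' (h i)))) W :=
      (HasFDerivAt.fun_sum (fun i _ => h1 i)).const_mul _
    have hB : HasFDerivAt
        (fun V : Matrix (Fin d') (Fin d) ℝ =>
          (lam / 2) * ∑ a : Fin d', ∑ b : Fin d, V a b ^ 2)
        ((lam / 2) • (∑ a : Fin d', ∑ b : Fin d, (2 * W a b) • entryCLM d d' a b)) W :=
      (HasFDerivAt.fun_sum (fun a _ => HasFDerivAt.fun_sum (fun b _ => h2 a b))).const_mul _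
    exact hA.add hB
  have hD0 : D = 0 := by rw [← hHas.fderiv]; exact hcrit
  -- the gradients
  set g : Fin n → Fin d' → ℝ := fun i => grad (ℓ i) (W.mulVec (h i)) with hg
  -- scalar consequence of criticality at elementary matrices
  have key : ∀ (a : Fin d') (b : Fin d),
      (1 / n : ℝ) * ∑ i, g i a * h i b + lam * W a b = 0 := by
    intro a b
    have := congrArg (fun L : Matrix (Fin d') (Fin d) ℝ →L[ℝ] ℝ =>
      L (Matrix.single a b 1)) hD0
    simp only [hD, ContinuousLinearMap.add_apply, ContinuousLinearMap.smul_apply,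
      ContinuousLinearMap.sum_apply, ContinuousLinearMap.comp_apply, entryCLM_apply,
      ContinuousLinearMap.zero_apply, smul_eq_mul] at this
    -- simplify the second sum
    have hsum2 : ∑ a' : Fin d', ∑ b' : Fin d,
        2 * W a' b' * (Matrix.single a b 1 : Matrix (Fin d') (Fin d) ℝ) a' b'
        = 2 * W a b := by
      rw [Finset.sum_eq_single a, Finset.sum_eq_single b]
      · simp [Matrix.single]
      · intro b' _ hb'; simp [Matrix.single, Ne.symm hb']
      · simp
      · intro a' _ ha'
        apply Finset.sum_eq_zero
        intro b' _
        simp [Matrix.single, Ne.symm ha']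
      · simp
    -- simplify the first sum: fderiv applied to Φᵢ(E_ab)
    have hterm : ∀ i : Fin n,
        fderiv ℝ (ℓ i) (PhiCLM d d' (h i) W) (PhiCLM d d' (h i) (Matrix.single a b 1))
          = g i a * h i b := by
      intro i
      have hvec : (Matrix.single a b 1 : Matrix (Fin d') (Fin d) ℝ).mulVec (h i)
          = h i b • (Pi.single a 1 : Fin d' → ℝ) := by
        funext j
        simp only [Matrix.mulVec, Matrix.single, dotProduct, Matrix.of_apply,
          Pi.smul_apply, Pi.single_apply, smul_eq_mul, ite_and]
        rcases eq_or_ne a j with rfl | hj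
        · simp [Finset.sum_ite_eq]
        · simp [hj, Ne.symm hj]
      have hgrad : fderiv ℝ (ℓ i) (PhiCLM d d' (h i) W)
          = (InnerProductSpace.toDual ℝ (EuclideanSpace ℝ (Fin d')))
              (gradient (ℓ i) (PhiCLM d d' (h i) W)) := by
        rw [gradient]; simp
      rw [hgrad]
      simp only [PhiCLM_apply, hvec, InnerProductSpace.toDual_apply_apply]
      have hsm : ((WithLp.equiv 2 (Fin d' → ℝ)).symm (h i b • (Pi.single a 1 : Fin d' → ℝ)))
          = h i b • (EuclideanSpace.single a (1 : ℝ)) := rfl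
      rw [hsm, inner_smul_right]
      have hsingle : inner (𝕜 := ℝ)
          (gradient (ℓ i) ((WithLp.equiv 2 (Fin d' → ℝ)).symm (W.mulVec (h i))))
          (EuclideanSpace.single a (1 : ℝ)) = g i a := by
        rw [EuclideanSpace.inner_single_right, hg]
        simp [grad]
      rw [hsingle]
      ring
    simp only [hterm, hsum2] at this
    -- now `this` should be the goal up to ring manipulation
    calc (1 / n : ℝ) * ∑ i, g i a * h i b + lam * W a b
        = (1 / n : ℝ) * ∑ i, g i a * h i b + lam / 2 * (2 * W a b) := by ring
      _ = 0 := this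
  -- final computation
  have hW : ∀ (a : Fin d') (b : Fin d),
      W a b = -(1 / (n * lam)) * ∑ i, g i a * h i b := by
    intro a b
    have hk := key a b
    have hn' : (n : ℝ) ≠ 0 := Nat.cast_ne_zero.mpr hn.ne'
    field_simp at hk ⊢
    linarith [hk]
  ext a c
  simp only [Matrix.mul_apply, Matrix.transpose_apply, Matrix.smul_apply,
    Matrix.sum_apply, Matrix.vecMulVec_apply, smul_eq_mul]
  calc ∑ b, W a b * W c b
      = ∑ b, W a b * (-(1 / (n * lam)) * ∑ i, g i c * h i b) := by
        refine Finset.sum_congr rfl fun b _ => ?_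
        rw [hW c b]
    _ = ∑ b, ∑ i, -(1 / (n * lam)) * (W a b * h i b * g i c) := by
        refine Finset.sum_congr rfl fun b _ => ?_
        rw [Finset.mul_sum, Finset.mul_sum]
        exact Finset.sum_congr rfl fun i _ => by ring
    _ = ∑ i, ∑ b, -(1 / (n * lam)) * (W a b * h i b * g i c) := Finset.sum_comm
    _ = -(1 / (n * lam)) * ∑ i, (∑ b, W a b * h i b) * g i c := by
        rw [Finset.mul_sum]
        refine Finset.sum_congr rfl fun i _ => ?_
        rw [← Finset.mul_sum, ← Finset.sum_mul]
    _ = -(1 / (n * lam)) * ∑ i, W.mulVec (h i) a * g i c := by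
        refine congrArg _ (Finset.sum_congr rfl fun i _ => ?_)
        simp [Matrix.mulVec, dotProduct]
    _ = -(1 / (↑n * lam)) * ∑ i, W.mulVec (h i) a * g i c := rfl
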